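/- Let k be a power of 2, n ≥ 1, and f a non-increasing probability density on {1,…,k}. For an integer j ≥ 0, let L_j be the set of leaves of the idealized tree T*(f) at depth j, and let q_j = Σ_{u∈L_j} f_{I_u} be the total probability mass of f on those leaves. Then |L_j| ≤ 2 + 3 (n q_j)^{1/3}. -/

import Mathlib

open Finset

/-- For `k = 2^m`, the node at depth `j` and position `i` (for `i < 2^j`) of the
complete binary tree of dyadic subintervals of `{1, …, 2^m}` covers the interval
`I_{j,i} = {i · 2^{m-j} + 1, …, (i+1) · 2^{m-j}}`. -/
def nodeInterval (m j i : ℕ) : Finset ℕ :=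
  Finset.Icc (i * 2 ^ (m - j) + 1) ((i + 1) * 2 ^ (m - j))

/-- `f_{I_{j,i}} = ∑_{x ∈ I_{j,i}} f x`, the mass of `f` on the interval of node `(j, i)`. -/
noncomputable def blockSum (f : ℕ → ℝ) (m j i : ℕ) : ℝ :=
  ∑ x ∈ nodeInterval m j i, f x

/-- The idealized splitting rule: the node `(j, i)` splits iff its interval has more
than one point (i.e. `j < m`) and, with `I_v`, `I_w` the left and right halves of its
interval, `f_{I_v} - f_{I_w} > √((f_{I_v} + f_{I_w})/n)`. -/
def Splits (f : ℕ → ℝ) (n m j i : ℕ) : Prop :=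
  j < m ∧
    blockSum f m (j + 1) (2 * i) - blockSum f m (j + 1) (2 * i + 1) >
      Real.sqrt ((blockSum f m (j + 1) (2 * i) + blockSum f m (j + 1) (2 * i + 1)) / n)

/-- Membership of the node `(j, i)` in the idealized tree `T*(f)`: the root `(0, 0)`
is in the tree, and a node is in the tree iff its parent is in the tree and splits. -/
def InTree (f : ℕ → ℝ) (n m : ℕ) : ℕ → ℕ → Prop
  | 0, i => i = 0
  | j + 1, i => InTree f n m j (i / 2) ∧ Splits f n m j (i / 2)

/-- The node `(j, i)` is a leaf of the idealized tree `T*(f)`: it belongs to the tree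
and does not split. -/
def IsLeaf (f : ℕ → ℝ) (n m j i : ℕ) : Prop :=
  InTree f n m j i ∧ ¬ Splits f n m j i

/-! ### Auxiliary lemmas -/

lemma aux_inTree_lt (f : ℕ → ℝ) (n m : ℕ) :
    ∀ j i, InTree f n m j i → i < 2 ^ j := by
  intro j
  induction j with
  | zero => intro i h; have : i = 0 := h; omega
  | succ j ih =>
    intro i h
    have h2 := ih _ h.1
    rw [pow_succ]
    omega

lemma aux_shift (m : ℕ) (f : ℕ → ℝ)
    (hmono : ∀ x, 1 ≤ x → x + 1 ≤ 2 ^ m → f (x + 1) ≤ f x) :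
    ∀ c x, 1 ≤ x → x + c ≤ 2 ^ m → f (x + c) ≤ f x := by
  intro c
  induction c with
  | zero => intro x _ _; simp
  | succ c ih =>
    intro x hx h
    calc f (x + (c+1)) = f ((x + c) + 1) := by rw [← add_assoc]
    _ ≤ f (x + c) := hmono _ (by omega) (by omega)
    _ ≤ f x := ih x hx (by omega)

lemma blockSum_anti (f : ℕ → ℝ) (m j : ℕ) (hj : j ≤ m)
    (hmono : ∀ x, 1 ≤ x → x + 1 ≤ 2 ^ m → f (x + 1) ≤ f x)
    {a b : ℕ} (hab : a ≤ b) (hb : b + 1 ≤ 2 ^ j) :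
    blockSum f m j b ≤ blockSum f m j a := by
  set w := 2 ^ (m - j) with hw
  have hw1 : 1 ≤ w := Nat.one_le_two_pow
  have hww : 2 ^ j * w = 2 ^ m := by
    rw [hw, ← pow_add]; congr 1; omega
  have e1 : a * w + (b - a) * w = b * w := by
    rw [← add_mul]; congr 1; omega
  have e2 : (a + 1) * w + (b - a) * w = (b + 1) * w := by
    rw [← add_mul]; congr 1; omega
  have key : blockSum f m j b
      = ∑ x ∈ Finset.Icc (a * w + 1) ((a+1) * w), f (x + (b - a) * w) := by
    have hIcc : Finset.Icc (b * w + 1) ((b+1) * w)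
        = (Finset.Icc (a * w + 1) ((a+1) * w)).map (addRightEmbedding ((b-a)*w)) := by
      rw [Finset.map_add_right_Icc]
      congr 1 <;> omega
    rw [blockSum, nodeInterval, ← hw, hIcc, Finset.sum_map]
    simp [addRightEmbedding_apply]
  rw [key, blockSum, nodeInterval]
  apply Finset.sum_le_sum
  intro x hx
  simp only [Finset.mem_Icc] at hx
  have hbw : (b + 1) * w ≤ 2 ^ m := by
    rw [← hww]; exact Nat.mul_le_mul_right _ hb
  exact aux_shift m f hmono _ x (by omega) (by omega)

lemma aux_sq_sum : ∀ w : ℕ, ((w:ℝ))^3 ≤ 3 * ∑ k ∈ Finset.range w, ((k:ℝ)+1)^2 := by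
  intro w
  induction w with
  | zero => simp
  | succ w ih =>
    rw [Finset.sum_range_succ]
    push_cast
    nlinarith [ih, Nat.cast_nonneg (α:=ℝ) w]

lemma sqrtge (c x : ℝ) (hc : 0 ≤ c) (h : c^2 ≤ x) : c ≤ Real.sqrt x := by
  have := Real.sqrt_le_sqrt h
  rwa [Real.sqrt_sq hc] at this

lemma key_count (t : ℕ) (ht : 3 ≤ t) (P : ℕ → ℝ) (hP0 : ∀ s, 0 ≤ P s)
    (hA : ∀ s, s + 3 ≤ t → Real.sqrt (P (s+1) + P (s+2)) < P s - P (s+2))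
    (hB : ∀ s, s + 2 ≤ t → 1 < P s) :
    ((t:ℝ) - 2)^3 ≤ 27 * ∑ s ∈ Finset.range t, P s := by
  set b : ℕ → ℝ := fun r => P (t - r) with hb
  have fact1 : ∀ r, 2 ≤ r → r ≤ t → 1 < b r := by
    intro r h2 hrt
    exact hB (t - r) (by omega)
  have fact2 : ∀ r, 2 ≤ r → r + 1 ≤ t →
      b (r-1) + Real.sqrt (b r + b (r-1)) ≤ b (r+1) := by
    intro r h2 hrt
    have h := hA (t - (r+1)) (by omega)
    have e1 : t - (r+1) + 1 = t - r := by omega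
    have e2 : t - (r+1) + 2 = t - (r-1) := by omega
    rw [e1, e2] at h
    simp only [hb]
    linarith [h]
  have hc6 : 6 ≤ t → (12/5 : ℝ) ≤ b 6 := by
    intro h6
    have h := fact2 5 (by omega) (by omega)
    norm_num at h
    have h4 := fact1 4 (by omega) (by omega)
    have h5 := fact1 5 (by omega) (by omega)
    have hs : (7/5:ℝ) ≤ Real.sqrt (b 5 + b 4) := sqrtge _ _ (by norm_num) (by nlinarith)
    linarith
  have hc7 : 7 ≤ t → (14/5 : ℝ) ≤ b 7 := by
    intro h7
    have h := fact2 6 (by omega) (by omega)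
    norm_num at h
    have h5 := fact1 5 (by omega) (by omega)
    have h6 := hc6 (by omega)
    have hs : (9/5:ℝ) ≤ Real.sqrt (b 6 + b 5) := sqrtge _ _ (by norm_num) (by nlinarith)
    linarith
  have hc8 : 8 ≤ t → (23/5 : ℝ) ≤ b 8 := by
    intro h8
    have h := fact2 7 (by omega) (by omega)
    norm_num at h
    have h6 := hc6 (by omega)
    have h7 := hc7 (by omega)
    have hs : (11/5:ℝ) ≤ Real.sqrt (b 7 + b 6) := sqrtge _ _ (by norm_num) (by nlinarith)
    linarith
  have hc9 : 9 ≤ t → (11/2 : ℝ) ≤ b 9 := by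
    intro h9
    have h := fact2 8 (by omega) (by omega)
    norm_num at h
    have h7 := hc7 (by omega)
    have h8 := hc8 (by omega)
    have hs : (27/10:ℝ) ≤ Real.sqrt (b 8 + b 7) := sqrtge _ _ (by norm_num) (by nlinarith)
    linarith
  have hc10 : 10 ≤ t → (77/10 : ℝ) ≤ b 10 := by
    intro h10
    have h := fact2 9 (by omega) (by omega)
    norm_num at h
    have h8 := hc8 (by omega)
    have h9 := hc9 (by omega)
    have hs : (31/10:ℝ) ≤ Real.sqrt (b 9 + b 8) := sqrtge _ _ (by norm_num) (by nlinarith)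
    linarith
  have hc11 : 11 ≤ t → (91/10 : ℝ) ≤ b 11 := by
    intro h11
    have h := fact2 10 (by omega) (by omega)
    norm_num at h
    have h9 := hc9 (by omega)
    have h10 := hc10 (by omega)
    have hs : (18/5:ℝ) ≤ Real.sqrt (b 10 + b 9) := sqrtge _ _ (by norm_num) (by nlinarith)
    linarith
  have claim : ∀ r, 3 ≤ r → r ≤ t → ((r:ℝ) - 2)^2 / 9 ≤ b r := by
    intro r
    induction r using Nat.strong_induction_on with
    | _ r IH =>
      intro h3 hrt
      by_cases h11 : r ≤ 11
      · interval_cases r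
        · have := fact1 3 (by omega) (by omega); norm_num; linarith
        · have := fact1 4 (by omega) (by omega); norm_num; linarith
        · have := fact1 5 (by omega) (by omega); norm_num; linarith
        · have := hc6 (by omega); norm_num; linarith
        · have := hc7 (by omega); norm_num; linarith
        · have := hc8 (by omega); norm_num; linarith
        · have := hc9 (by omega); norm_num; linarith
        · have := hc10 (by omega); norm_num; linarith
        · have := hc11 (by omega); norm_num; linarith
      · push_neg at h11
        have hr12 : 12 ≤ r := h11
        have h1 := IH (r-1) (by omega) (by omega) (by omega)
        have h2 := IH (r-2) (by omega) (by omega) (by omega)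
        have hrec := fact2 (r-1) (by omega) (by omega)
        have e1 : r - 1 - 1 = r - 2 := by omega
        have e2 : r - 1 + 1 = r := by omega
        rw [e1, e2] at hrec
        have hcast1 : ((r-1:ℕ):ℝ) = (r:ℝ) - 1 := by
          have := Nat.cast_sub (show 1 ≤ r by omega) (R := ℝ); simpa using this
        have hcast2 : ((r-2:ℕ):ℝ) = (r:ℝ) - 2 := by
          have := Nat.cast_sub (show 2 ≤ r by omega) (R := ℝ); simpa using this
        rw [hcast1] at h1
        rw [hcast2] at h2
        have hr12' : (12:ℝ) ≤ (r:ℝ) := by exact_mod_cast hr12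
        have hs : (4*((r:ℝ)-3))/9 ≤ Real.sqrt (b (r-1) + b (r-2)) := by
          apply sqrtge _ _ (by linarith)
          nlinarith [mul_nonneg (show (0:ℝ) ≤ (r:ℝ)-12 by linarith)
            (show (0:ℝ) ≤ (r:ℝ)-3 by linarith)]
        have hid : ((r:ℝ)-2)^2/9 = ((r:ℝ)-2-2)^2/9 + 4*((r:ℝ)-3)/9 := by ring
        linarith
  have hdrop : ∑ s ∈ Finset.range (t-2), P s ≤ ∑ s ∈ Finset.range t, P s :=
    Finset.sum_le_sum_of_subset_of_nonneg
      (Finset.range_mono (show t - 2 ≤ t by omega)) (fun i _ _ => hP0 i)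
  have hlow : ∀ s ∈ Finset.range (t-2), (((t-2-s:ℕ):ℝ))^2/9 ≤ P s := by
    intro s hs
    simp only [Finset.mem_range] at hs
    have hcl := claim (t - s) (by omega) (by omega)
    have e : t - (t - s) = s := by omega
    have hb' : b (t - s) = P s := by rw [hb]; simp only; rw [e]
    rw [hb'] at hcl
    have hcast : ((t-s:ℕ):ℝ) - 2 = ((t-2-s:ℕ):ℝ) := by
      have h1 : ((t-s:ℕ):ℝ) = (t:ℝ) - (s:ℝ) := by
        have := Nat.cast_sub (show s ≤ t by omega) (R := ℝ); simpa using this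
      have h3 : ((t-2:ℕ):ℝ) = (t:ℝ) - 2 := by
        have := Nat.cast_sub (show 2 ≤ t by omega) (R := ℝ); simpa using this
      have h2 : ((t-2-s:ℕ):ℝ) = (t:ℝ) - 2 - (s:ℝ) := by
        have h4 := Nat.cast_sub (show s ≤ t - 2 by omega) (R := ℝ)
        rw [h4, h3]
      rw [h1, h2]; ring
    rwa [hcast] at hcl
  have hsum1 : ∑ s ∈ Finset.range (t-2), (((t-2-s:ℕ):ℝ))^2/9
      ≤ ∑ s ∈ Finset.range (t-2), P s := Finset.sum_le_sum hlow
  have hreflect : ∑ s ∈ Finset.range (t-2), (((t-2-s:ℕ):ℝ))^2/9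
      = ∑ k ∈ Finset.range (t-2), ((k:ℝ)+1)^2/9 := by
    rw [← Finset.sum_range_reflect (fun k => ((k:ℝ)+1)^2/9) (t-2)]
    apply Finset.sum_congr rfl
    intro s hs
    simp only [Finset.mem_range] at hs
    have h5 : t - 2 - s = (t - 2 - 1 - s) + 1 := by omega
    rw [h5]
    push_cast
    ring
  have hsq := aux_sq_sum (t-2)
  have h9 : ∑ k ∈ Finset.range (t-2), ((k:ℝ)+1)^2
      = 9 * ∑ k ∈ Finset.range (t-2), ((k:ℝ)+1)^2/9 := by
    rw [Finset.mul_sum]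
    apply Finset.sum_congr rfl
    intro k _; ring
  have hcastT : ((t-2:ℕ):ℝ) = (t:ℝ) - 2 := by
    have := Nat.cast_sub (show 2 ≤ t by omega) (R := ℝ); simpa using this
  rw [hcastT] at hsq
  linarith

set_option maxHeartbeats 1000000 in
/-- For `k = 2^m` a power of two, `n ≥ 1`, and `f` a non-increasing probability
density on `{1, …, k}`, if `L_j` is the set of leaves of the idealized tree `T*(f)`
at depth `j` and `q_j` is the total probability mass of `f` on those leaves, then
`|L_j| ≤ 2 + 3 (n q_j)^{1/3}`. -/
theorem stmt10 (m n : ℕ) (hn : 1 ≤ n) (f : ℕ → ℝ)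
    (hf0 : ∀ x, 0 ≤ f x)
    (hf1 : ∑ x ∈ Finset.Icc 1 (2 ^ m), f x = 1)
    (hmono : ∀ x, 1 ≤ x → x + 1 ≤ 2 ^ m → f (x + 1) ≤ f x)
    (j : ℕ)
    (Lj : Finset ℕ) (hLj : ∀ i, i ∈ Lj ↔ IsLeaf f n m j i)
    (qj : ℝ) (hqj : qj = ∑ i ∈ Lj, blockSum f m j i) :
    (Lj.card : ℝ) ≤ 2 + 3 * ((n : ℝ) * qj) ^ ((1 : ℝ) / 3) := by
  have hbs0 : ∀ j' i', 0 ≤ blockSum f m j' i' := fun j' i' =>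
    Finset.sum_nonneg fun x _ => hf0 x
  have hq0 : 0 ≤ qj := by
    rw [hqj]; exact Finset.sum_nonneg fun i _ => hbs0 _ _
  have hn0 : (0:ℝ) < n := by exact_mod_cast hn
  have hX0 : 0 ≤ (n:ℝ) * qj := by positivity
  have hrpow0 : 0 ≤ ((n:ℝ) * qj) ^ ((1:ℝ)/3) := Real.rpow_nonneg hX0 _
  set t := Lj.card with ht
  by_cases ht2 : t ≤ 2
  · have : (t:ℝ) ≤ 2 := by exact_mod_cast ht2
    linarith
  push_neg at ht2
  have ht3 : 3 ≤ t := ht2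
  obtain ⟨jj, rfl⟩ : ∃ jj, j = jj + 1 := by
    rcases Nat.eq_zero_or_pos j with h0 | h0
    · exfalso
      subst h0
      have hsub : Lj ⊆ {0} := by
        intro i hi
        have : i = 0 := ((hLj i).mp hi).1
        simp [this]
      have := Finset.card_le_card hsub
      simp at this
      omega
    · exact ⟨j - 1, by omega⟩
  have hjm : jj < m := by
    obtain ⟨v0, hv0⟩ := Finset.card_pos.mp (show 0 < Lj.card by omega)
    exact ((hLj v0).mp hv0).1.2.1
  set e := Lj.orderEmbOfFin ht.symm with he
  have he_mem : ∀ s : Fin t, e s ∈ Lj := fun s => Finset.orderEmbOfFin_mem Lj ht.symm s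
  have hleaf : ∀ s : Fin t, IsLeaf f n m (jj+1) (e s) := fun s => (hLj _).mp (he_mem s)
  have hlt2 : ∀ s : Fin t, e s < 2 ^ (jj+1) := fun s =>
    aux_inTree_lt f n m (jj+1) (e s) (hleaf s).1
  have hpow : 2 ^ (jj+1) = 2 * 2 ^ jj := by rw [pow_succ]; ring
  set P : ℕ → ℝ := fun s => if h : s < t then (n:ℝ) * blockSum f m (jj+1) (e ⟨s,h⟩) else 0
    with hP
  have hPval : ∀ (s : ℕ) (h : s < t), P s = (n:ℝ) * blockSum f m (jj+1) (e ⟨s,h⟩) := by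
    intro s h
    rw [hP]
    simp only [dif_pos h]
  have hP0 : ∀ s, 0 ≤ P s := by
    intro s
    rw [hP]
    by_cases h : s < t
    · simp only [dif_pos h]; exact mul_nonneg hn0.le (hbs0 _ _)
    · simp only [dif_neg h]; exact le_rfl
  have central : ∀ s : ℕ, s + 2 ≤ t →
      1 < P s ∧ (s + 3 ≤ t → Real.sqrt (P (s+1) + P (s+2)) < P s - P (s+2)) := by
    intro s hs2
    have h0 : s < t := by omega
    have h1 : s + 1 < t := by omega
    set v := e ⟨s+1, h1⟩ with hv
    have hvleaf := hleaf ⟨s+1, h1⟩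
    have hIn : InTree f n m (jj+1) v := hvleaf.1
    have hsp : Splits f n m jj (v / 2) := hIn.2
    have hgap := hsp.2
    set gL := blockSum f m (jj+1) (2 * (v/2)) with hgL
    set gR := blockSum f m (jj+1) (2 * (v/2) + 1) with hgR
    have hv2 : v / 2 < 2 ^ jj := aux_inTree_lt f n m jj (v/2) hIn.1
    have hvlt : v < 2 ^ (jj+1) := hlt2 ⟨s+1, h1⟩
    have hEs : e ⟨s, h0⟩ < v := e.strictMono (by simp [Fin.lt_def])
    have hEslt : e ⟨s, h0⟩ < 2 ^ (jj+1) := hlt2 ⟨s, h0⟩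
    have hgR0 : 0 ≤ gR := hbs0 _ _
    have hgL0' : 0 ≤ gL := hbs0 _ _
    have hgL_le : gL ≤ blockSum f m (jj+1) (e ⟨s, h0⟩) :=
      blockSum_anti f m (jj+1) (by omega) hmono (by omega) (by omega)
    have hgL_ge : blockSum f m (jj+1) v ≤ gL :=
      blockSum_anti f m (jj+1) (by omega) hmono (by omega) (by omega)
    have hgR_le : gR ≤ blockSum f m (jj+1) v :=
      blockSum_anti f m (jj+1) (by omega) hmono (by omega) (by omega)
    have hgBv0 : 0 ≤ blockSum f m (jj+1) v := hbs0 _ _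
    constructor
    · -- 1 < P s
      have hmon : Real.sqrt (gL / n) ≤ Real.sqrt ((gL + gR) / n) :=
        Real.sqrt_le_sqrt (by apply div_le_div_of_nonneg_right ?_ hn0.le; linarith)
      have hL : Real.sqrt (gL / n) < gL := by
        calc Real.sqrt (gL / n) ≤ Real.sqrt ((gL + gR) / n) := hmon
        _ < gL - gR := hgap
        _ ≤ gL := by linarith
      have hgLpos : 0 < gL := lt_of_le_of_lt (Real.sqrt_nonneg _) hL
      have hsq : gL / n < gL ^ 2 := (Real.sqrt_lt' hgLpos).mp hL
      have hsq' : gL < gL ^ 2 * n := by rwa [div_lt_iff₀ hn0] at hsq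
      have h1n : 1 < (n:ℝ) * gL := by
        have hmul : (1:ℝ) * gL < ((n:ℝ) * gL) * gL := by nlinarith
        exact lt_of_mul_lt_mul_right hmul hgLpos.le
      rw [hPval s h0]
      nlinarith [hgL_le]
    · intro hs3
      have h2 : s + 2 < t := by omega
      set u := e ⟨s+2, h2⟩ with hu
      have hvu : v < u := e.strictMono (by simp [Fin.lt_def, hv, hu])
      have hult : u < 2 ^ (jj+1) := hlt2 ⟨s+2, h2⟩
      have hgR_ge : blockSum f m (jj+1) u ≤ gR :=
        blockSum_anti f m (jj+1) (by omega) hmono (by omega) (by omega)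
      have hgBu0 : 0 ≤ blockSum f m (jj+1) u := hbs0 _ _
      rw [hPval s h0, hPval (s+1) h1, hPval (s+2) h2, ← hv, ← hu]
      set A := blockSum f m (jj+1) (e ⟨s, h0⟩) with hA
      set B := blockSum f m (jj+1) v with hB
      set C := blockSum f m (jj+1) u with hC
      have step1 : Real.sqrt ((n:ℝ) * B + (n:ℝ) * C) ≤ Real.sqrt ((n:ℝ) * (gL + gR)) := by
        apply Real.sqrt_le_sqrt
        nlinarith
      have step2 : Real.sqrt ((n:ℝ) * (gL + gR)) = (n:ℝ) * Real.sqrt ((gL + gR) / n) := by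
        have hid : (n:ℝ) * (gL + gR) = (n:ℝ)^2 * ((gL + gR) / n) := by
          field_simp
        rw [hid, Real.sqrt_mul (by positivity) _, Real.sqrt_sq hn0.le]
      have step3 : (n:ℝ) * Real.sqrt ((gL + gR) / n) < (n:ℝ) * (gL - gR) :=
        mul_lt_mul_of_pos_left hgap hn0
      have step4 : (n:ℝ) * (gL - gR) ≤ (n:ℝ) * A - (n:ℝ) * C := by nlinarith
      calc Real.sqrt ((n:ℝ) * B + (n:ℝ) * C)
          ≤ Real.sqrt ((n:ℝ) * (gL + gR)) := step1
        _ = (n:ℝ) * Real.sqrt ((gL + gR) / n) := step2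
        _ < (n:ℝ) * (gL - gR) := step3
        _ ≤ (n:ℝ) * A - (n:ℝ) * C := step4
  have hAh : ∀ s, s + 3 ≤ t → Real.sqrt (P (s+1) + P (s+2)) < P s - P (s+2) :=
    fun s h => (central s (by omega)).2 h
  have hBh : ∀ s, s + 2 ≤ t → 1 < P s := fun s h => (central s h).1
  have hkey := key_count t ht3 P hP0 hAh hBh
  have hsum : ∑ s ∈ Finset.range t, P s = (n:ℝ) * qj := by
    rw [hqj, Finset.mul_sum, ← Fin.sum_univ_eq_sum_range P t]
    apply Finset.sum_bij (fun (s : Fin t) _ => e s)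
    · intro a _; exact he_mem a
    · intro a _ b _ hab; exact e.injective hab
    · intro b hb
      have hb' : b ∈ Set.range e := by
        rw [he, Finset.range_orderEmbOfFin]; exact hb
      obtain ⟨a, ha⟩ := hb'
      exact ⟨a, Finset.mem_univ a, ha⟩
    · intro a _
      rw [hPval a a.isLt]
  rw [hsum] at hkey
  have hta : (0:ℝ) ≤ (t:ℝ) - 2 := by
    have : (3:ℝ) ≤ t := by exact_mod_cast ht3
    linarith
  have h1 : (t:ℝ) - 2 ≤ (27 * ((n:ℝ)*qj)) ^ ((1:ℝ)/3) := by
    have heq : ((t:ℝ) - 2) = (((t:ℝ)-2)^(3:ℕ)) ^ ((1:ℝ)/3) := by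
      rw [← Real.rpow_natCast ((t:ℝ)-2) 3, ← Real.rpow_mul hta]
      norm_num
    rw [heq]
    apply Real.rpow_le_rpow (by positivity) hkey (by norm_num)
  have h2 : (27 * ((n:ℝ)*qj)) ^ ((1:ℝ)/3) = 3 * ((n:ℝ)*qj) ^ ((1:ℝ)/3) := by
    rw [Real.mul_rpow (by norm_num) hX0]
    congr 1
    rw [show (27:ℝ) = 3 ^ (3:ℕ) by norm_num, ← Real.rpow_natCast 3 3,
      ← Real.rpow_mul (by norm_num)]
    norm_num
  rw [h2] at h1
  linarith
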